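/- Let I ⊆ M_m be a decreasing monomial set with r = max_{f∈I} deg(f), and let f,g ∈ I_r with h = gcd(f,g) of degree r−2. Then |LTA(m,2)_h·h · (LTA(m,2)_f·(f/h) + LTA(m,2)_g·(g/h))| = |LTA(m,2)_h·h| · |LTA(m,2)_f·(f/h) + LTA(m,2)_g·(g/h)|. -/
import Mathlib


open Finset Pointwise

/-- Points of the affine space `F_2^m`. -/
abbrev Point (m : ℕ) := Fin m → ZMod 2

/-- The ring `R_m = F_2[x_0,…,x_{m-1}]/(x_i^2 - x_i)`, identified with the ring of
functions `F_2^m → F_2` via the evaluation isomorphism `ev`. -/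
abbrev Fn (m : ℕ) := Point m → ZMod 2

/-- The monomial `∏_{i ∈ S} x_i` (as the function it evaluates to). -/
def monFn (m : ℕ) (S : Finset (Fin m)) : Fn m := fun u => ∏ i ∈ S, u i

/-- Hamming weight of `ev(P)`: the number of points where `P` takes the value 1. -/
def wt (m : ℕ) (P : Fn m) : ℕ := (Finset.univ.filter fun u => P u = 1).card

/-- The monomial code `C(I)`: the `F_2`-span of the evaluations of the monomials in `I`. -/
def code (m : ℕ) (I : Set (Finset (Fin m))) : Submodule (ZMod 2) (Fn m) :=
  Submodule.span (ZMod 2) (monFn m '' I)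

/-- `f ≼_sh g` for monomials of equal degree: the sorted index lists compare entrywise. -/
def shLE (m : ℕ) (S T : Finset (Fin m)) : Prop :=
  S.card = T.card ∧
    ∀ (ℓ : ℕ) (hS : ℓ < (S.sort (· ≤ ·)).length) (hT : ℓ < (T.sort (· ≤ ·)).length),
      (S.sort (· ≤ ·)).get ⟨ℓ, hS⟩ ≤ (T.sort (· ≤ ·)).get ⟨ℓ, hT⟩

/-- `f ≼ g` iff there is a monomial `g*` with `f ≼_sh g* ≼_w g`. -/
def pre (m : ℕ) (S T : Finset (Fin m)) : Prop :=
  ∃ U : Finset (Fin m), shLE m S U ∧ U ⊆ T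

/-- A decreasing set of monomials. -/
def Decreasing (m : ℕ) (I : Set (Finset (Fin m))) : Prop :=
  ∀ f ∈ I, ∀ g : Finset (Fin m), pre m g f → g ∈ I

/-- The affine map `u ↦ B u + ε` on `F_2^m`. -/
def affMap (m : ℕ) (B : Fin m → Fin m → ZMod 2) (ε : Point m) (u : Point m) : Point m :=
  fun i => (∑ j, B i j * u j) + ε i

/-- `B` is lower triangular with unit diagonal. -/
def IsLT (m : ℕ) (B : Fin m → Fin m → ZMod 2) : Prop :=
  (∀ i, B i i = 1) ∧ ∀ i j : Fin m, i < j → B i j = 0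

/-- The action of `(B,ε) ∈ LTA(m,2)` on `R_m`: substitute `x_i ↦ x_i + Σ_{j<i} b_{i,j} x_j + ε_i`.
In the function representation this is precomposition with the affine map. -/
def act (m : ℕ) (B : Fin m → Fin m → ZMod 2) (ε : Point m) (P : Fn m) : Fn m :=
  fun u => P (affMap m B ε u)

/-- The orbit `LTA(m,2)·P`. -/
def orbit (m : ℕ) (P : Fn m) : Set (Fn m) :=
  {Q | ∃ B ε, IsLT m B ∧ Q = act m B ε P}

/-- Membership in the subgroup `LTA(m,2)_g` for the monomial `g` with index set `S`:
`ε_i = 0` if `i ∉ ind(g)`, and `b_{i,j} = 0` (off the diagonal) if `i ∉ ind(g)` or `j ∈ ind(g)`. -/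
def IsLTsub (m : ℕ) (S : Finset (Fin m)) (B : Fin m → Fin m → ZMod 2) (ε : Point m) : Prop :=
  IsLT m B ∧ (∀ i, i ∉ S → ε i = 0) ∧
    ∀ i j : Fin m, j ≠ i → (i ∉ S ∨ j ∈ S) → B i j = 0

/-- The orbit `LTA(m,2)_g · P` where `S = ind(g)`. -/
def orbitSub (m : ℕ) (S : Finset (Fin m)) (P : Fn m) : Set (Fn m) :=
  {Q | ∃ B ε, IsLTsub m S B ε ∧ Q = act m B ε P}

/-- `λ_f(i) = |{j : j < i, j ∉ ind(f)}|` where `S = ind(f)`. -/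
def lam (m : ℕ) (S : Finset (Fin m)) (i : Fin m) : ℕ :=
  (Finset.univ.filter fun j => j < i ∧ j ∉ S).card

/-- `|λ_f(g)| = Σ_{i ∈ ind(g)} λ_f(i)`. -/
def lamSum (m : ℕ) (S T : Finset (Fin m)) : ℕ := ∑ i ∈ T, lam m S i

/-- The affine form `c + Σ_i a_i x_i`. -/
def affForm (m : ℕ) (c : ZMod 2) (a : Point m) : Fn m := fun u => c + ∑ i, a i * u i

/-- `deg(P) ≤ r`: `P` lies in the span of the (multilinear) monomials of degree at most `r`. -/
def degLE (m : ℕ) (P : Fn m) (r : ℕ) : Prop :=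
  P ∈ Submodule.span (ZMod 2)
    {Q : Fn m | ∃ S : Finset (Fin m), S.card ≤ r ∧ Q = monFn m S}



-- Auxiliary lemmas

lemma z2_add_self (x : ZMod 2) : x + x = 0 := by revert x; decide

lemma z2_eq_of_add_eq_zero {x y : ZMod 2} (h : x + y = 0) : x = y := by revert x y; decide

lemma z2_cases (x : ZMod 2) : x = 0 ∨ x = 1 := by revert x; decide

lemma z2_mul_eq_one {x y : ZMod 2} (h : x * y = 1) : x = 1 ∧ y = 1 := by revert x y; decide

lemma z2_prod_eq_one {m : ℕ} {s : Finset (Fin m)} {t : Fin m → ZMod 2} :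
    ∏ i ∈ s, t i = 1 ↔ ∀ i ∈ s, t i = 1 := by
  constructor
  · intro hp i hi
    rcases z2_cases (t i) with h0 | h1
    · rw [Finset.prod_eq_zero hi h0] at hp; exact absurd hp (by decide)
    · exact h1
  · exact Finset.prod_eq_one

lemma act_apply {m : ℕ} (B : Fin m → Fin m → ZMod 2) (ε : Point m) (S : Finset (Fin m))
    (u : Point m) : act m B ε (monFn m S) u = ∏ i ∈ S, affMap m B ε u i := rfl

lemma affMap_add {m : ℕ} (B : Fin m → Fin m → ZMod 2) (ε : Point m) (i : Fin m)
    (u v : Point m) :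
    affMap m B ε u i + affMap m B ε v i = ∑ j, B i j * (u j + v j) := by
  simp only [affMap, mul_add, Finset.sum_add_distrib]
  linear_combination z2_add_self (ε i)

lemma affMap_three {m : ℕ} (B : Fin m → Fin m → ZMod 2) (ε : Point m) (i : Fin m)
    (u v w : Point m) :
    affMap m B ε (u + v + w) i = affMap m B ε u i + affMap m B ε v i + affMap m B ε w i := by
  simp only [affMap, Pi.add_apply, mul_add, Finset.sum_add_distrib]
  linear_combination (-1 : ZMod 2) * z2_add_self (ε i)

/-- off-`h'` independence of relevant coordinates. -/
lemma affMap_congr_off {m : ℕ} {S h' : Finset (Fin m)} {B : Fin m → Fin m → ZMod 2}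
    {ε : Point m} (hBε : IsLTsub m S B ε) (hsub : h' ⊆ S) {i : Fin m} (hi : i ∈ S)
    (hih : i ∉ h') {u v : Point m} (huv : ∀ j, j ∉ h' → u j = v j) :
    affMap m B ε u i = affMap m B ε v i := by
  apply z2_eq_of_add_eq_zero
  rw [affMap_add]
  apply Finset.sum_eq_zero
  intro j _
  by_cases hj : j ∈ h'
  · have hji : j ≠ i := fun hji => hih (hji ▸ hj)
    rw [hBε.2.2 i j hji (Or.inr (hsub hj)), zero_mul]
  · rw [huv j hj, z2_add_self, mul_zero]

lemma affMap_add_self_congr {m : ℕ} {h' : Finset (Fin m)} {B : Fin m → Fin m → ZMod 2}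
    {ε : Point m} (hBε : IsLTsub m h' B ε) {i : Fin m} (hi : i ∈ h')
    {u v : Point m} (huv : ∀ j, j ∉ h' → u j = v j) :
    affMap m B ε u i + affMap m B ε v i = u i + v i := by
  rw [affMap_add]
  rw [Finset.sum_eq_single i]
  · rw [hBε.1.1 i, one_mul]
  · intro j _ hji
    by_cases hj : j ∈ h'
    · rw [hBε.2.2 i j hji (Or.inr hj), zero_mul]
    · rw [huv j hj, z2_add_self, mul_zero]
  · intro hni; exact absurd (Finset.mem_univ i) hni

lemma affMap_add_triangular {m : ℕ} {B : Fin m → Fin m → ZMod 2} {ε : Point m}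
    (hB : IsLT m B) {i : Fin m} {u v : Point m} (huv : ∀ j, j < i → u j = v j) :
    affMap m B ε u i + affMap m B ε v i = u i + v i := by
  rw [affMap_add]
  rw [Finset.sum_eq_single i]
  · rw [hB.1 i, one_mul]
  · intro j _ hji
    rcases lt_or_gt_of_ne hji with hlt | hgt
    · rw [huv j hlt, z2_add_self, mul_zero]
    · rw [hB.2 i j hgt, zero_mul]
  · intro hni; exact absurd (Finset.mem_univ i) hni

/-- the point where `a` takes the value 1 over a given coset. -/
lemma exists_one_point {m : ℕ} {h' : Finset (Fin m)} {B : Fin m → Fin m → ZMod 2}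
    {ε : Point m} (hBε : IsLTsub m h' B ε) (u : Point m) :
    ∃ u' : Point m, (∀ j, j ∉ h' → u' j = u j) ∧ ∀ i ∈ h', affMap m B ε u' i = 1 := by
  classical
  refine ⟨fun j => if j ∈ h' then u j + affMap m B ε u j + 1 else u j,
    fun j hj => by simp [hj], ?_⟩
  intro i hi
  have hcong := affMap_add_self_congr hBε hi
      (u := fun j => if j ∈ h' then u j + affMap m B ε u j + 1 else u j) (v := u)
      (fun j hj => by simp [hj])
  simp only [if_pos hi] at hcong
  linear_combination hcong + z2_add_self (u i)

lemma decP : ∀ e1 e2 e3 e4 : ZMod 2, ∃ p1 p2 p3 p4 q1 q2 q3 q4 : ZMod 2,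
    p1 * p2 + p3 * p4 = 1 ∧ q1 * q2 + q3 * q4 = 1 ∧
      p1 + q1 = e1 ∧ p2 + q2 = e2 ∧ p3 + q3 = e3 ∧ p4 + q4 = e4 := by decide

lemma span_lemma {m : ℕ} {i1 i2 j1 j2 : Fin m}
    (h12 : i1 ≠ i2) (h34 : j1 ≠ j2) (h13 : i1 ≠ j1) (h14 : i1 ≠ j2)
    (h23 : i2 ≠ j1) (h24 : i2 ≠ j2)
    {Bb Bc : Fin m → Fin m → ZMod 2} {εb εc : Point m}
    (hBb : IsLT m Bb) (hBc : IsLT m Bc)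
    (δ : Fn m)
    (hδ : ∀ u v w, δ (u + v + w) = δ u + δ v + δ w)
    (hvan : ∀ w : Point m, affMap m Bb εb w i1 * affMap m Bb εb w i2
        + affMap m Bc εc w j1 * affMap m Bc εc w j2 = 1 → δ w = 0)
    (u0 : Point m) : δ u0 = 0 := by
  classical
  set Ψ : Point m → Point m := fun u i =>
    if i = i1 ∨ i = i2 then affMap m Bb εb u i
    else if i = j1 ∨ i = j2 then affMap m Bc εc u i else u i with hΨdef
  have hΨdiff : ∀ (i : Fin m) (u v : Point m), (∀ j, j < i → u j = v j) →
      Ψ u i + Ψ v i = u i + v i := by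
    intro i u v huv
    by_cases hc1 : i = i1 ∨ i = i2
    · simp only [hΨdef, if_pos hc1]
      exact affMap_add_triangular hBb huv
    · by_cases hc2 : i = j1 ∨ i = j2
      · simp only [hΨdef, if_neg hc1, if_pos hc2]
        exact affMap_add_triangular hBc huv
      · simp only [hΨdef, if_neg hc1, if_neg hc2]
  have hΨinj : Function.Injective Ψ := by
    intro u v huv
    by_contra hne
    have hnon : (Finset.univ.filter fun i => u i ≠ v i).Nonempty := by
      rcases Function.ne_iff.mp hne with ⟨i, hi⟩
      exact ⟨i, by simp [hi]⟩
    set i := hnon.choose with hidef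
    have hi := hnon.choose_spec
    rw [Finset.mem_filter] at hi
    clear hidef hi
    set i0 := (Finset.univ.filter fun i => u i ≠ v i).min' hnon with hi0def
    have hi0 := (Finset.univ.filter fun i => u i ≠ v i).min'_mem hnon
    rw [Finset.mem_filter] at hi0
    have hbelow : ∀ j, j < i0 → u j = v j := by
      intro j hj
      by_contra hne'
      have : i0 ≤ j := Finset.min'_le _ _ (by simp [hne'])
      exact absurd hj (not_lt.mpr this)
    have hdd := hΨdiff i0 u v hbelow
    rw [congrFun huv i0, z2_add_self] at hdd
    exact hi0.2 (z2_eq_of_add_eq_zero hdd.symm)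
  have hΨ3 : ∀ u v w, Ψ (u + v + w) = Ψ u + Ψ v + Ψ w := by
    intro u v w
    funext i
    simp only [hΨdef, Pi.add_apply]
    split_ifs
    · exact affMap_three _ _ _ _ _ _
    · exact affMap_three _ _ _ _ _ _
    · rfl
  have hΨsurj : Function.Surjective Ψ := Finite.injective_iff_surjective.mp hΨinj
  set z0 := Ψ u0 with hz0
  obtain ⟨p1, p2, p3, p4, q1, q2, q3, q4, hp, hq, he1, he2, he3, he4⟩ :=
    decP (z0 i1 + 1) (z0 i2 + 1) (z0 j1) (z0 j2)
  set s1 : Point m := fun i => if i = i1 then 1 else if i = i2 then 1 else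
    if i = j1 then 0 else if i = j2 then 0 else z0 i with hs1
  set s2 : Point m := fun i => if i = i1 then p1 else if i = i2 then p2 else
    if i = j1 then p3 else if i = j2 then p4 else z0 i with hs2
  set s3 : Point m := fun i => if i = i1 then q1 else if i = i2 then q2 else
    if i = j1 then q3 else if i = j2 then q4 else z0 i with hs3
  obtain ⟨u1, hu1⟩ := hΨsurj s1
  obtain ⟨u2, hu2⟩ := hΨsurj s2
  obtain ⟨u3, hu3⟩ := hΨsurj s3
  have hval : ∀ (u' : Point m), Ψ u' = s1 ∨ Ψ u' = s2 ∨ Ψ u' = s3 → δ u' = 0 := by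
    intro u' hs
    apply hvan
    have e1 : affMap m Bb εb u' i1 = Ψ u' i1 := by simp [hΨdef]
    have e2 : affMap m Bb εb u' i2 = Ψ u' i2 := by simp [hΨdef]
    have e3 : affMap m Bc εc u' j1 = Ψ u' j1 := by
      simp [hΨdef, h13.symm, h23.symm]
    have e4 : affMap m Bc εc u' j2 = Ψ u' j2 := by
      simp [hΨdef, h14.symm, h24.symm]
    rw [e1, e2, e3, e4]
    have sval : ∀ (s : Point m) (a b c d : ZMod 2),
        (s = fun i => if i = i1 then a else if i = i2 then b else
          if i = j1 then c else if i = j2 then d else z0 i) →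
        s i1 = a ∧ s i2 = b ∧ s j1 = c ∧ s j2 = d := by
      intro s a b c d hdef
      subst hdef
      refine ⟨by simp, ?_, ?_, ?_⟩
      · simp [if_neg h12.symm]
      · simp [if_neg h13.symm, if_neg h23.symm]
      · simp [if_neg h14.symm, if_neg h24.symm, if_neg h34.symm]
    rcases hs with h | h | h <;> rw [h]
    · obtain ⟨e1, e2, e3, e4⟩ := sval s1 1 1 0 0 hs1
      rw [e1, e2, e3, e4]; decide
    · obtain ⟨e1, e2, e3, e4⟩ := sval s2 p1 p2 p3 p4 hs2
      rw [e1, e2, e3, e4]; exact hp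
    · obtain ⟨e1, e2, e3, e4⟩ := sval s3 q1 q2 q3 q4 hs3
      rw [e1, e2, e3, e4]; exact hq
  have hsum : u1 + u2 + u3 = u0 := by
    apply hΨinj
    rw [hΨ3, hu1, hu2, hu3, ← hz0]
    funext i
    simp only [Pi.add_apply, hs1, hs2, hs3]
    by_cases e1 : i = i1
    · subst e1
      simp only [if_pos rfl, if_true]
      linear_combination he1 + z2_add_self 1
    · by_cases e2 : i = i2
      · subst e2
        simp only [if_neg e1, if_pos rfl, if_true]
        linear_combination he2 + z2_add_self 1
      · by_cases e3 : i = j1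
        · subst e3
          simp only [if_neg e1, if_neg e2, if_pos rfl, if_true]
          linear_combination he3
        · by_cases e4 : i = j2
          · subst e4
            simp only [if_neg e1, if_neg e2, if_neg e3, if_pos rfl, if_true]
            linear_combination he4
          · simp only [if_neg e1, if_neg e2, if_neg e3, if_neg e4]
            linear_combination z2_add_self (z0 i)
  have h0 := hδ u1 u2 u3
  rw [hsum, hval u1 (Or.inl hu1), hval u2 (Or.inr (Or.inl hu2)),
    hval u3 (Or.inr (Or.inr hu3))] at h0
  simpa using h0


/-- the cardinality of the product set is the product of the cardinalities. -/
theorem stmt12 (m : ℕ) (hm : 1 ≤ m) (I : Set (Finset (Fin m))) (hdec : Decreasing m I)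
    (r : ℕ) (hub : ∀ f ∈ I, f.card ≤ r) (hmax : ∃ f ∈ I, f.card = r)
    (f g : Finset (Fin m)) (hf : f ∈ I) (hg : g ∈ I)
    (hfr : f.card = r) (hgr : g.card = r) (hh : (f ∩ g).card = r - 2) :
    (orbitSub m (f ∩ g) (monFn m (f ∩ g)) *
        (orbitSub m f (monFn m (f \ (f ∩ g))) +
          orbitSub m g (monFn m (g \ (f ∩ g))))).ncard =
      (orbitSub m (f ∩ g) (monFn m (f ∩ g))).ncard *
        (orbitSub m f (monFn m (f \ (f ∩ g))) +
          orbitSub m g (monFn m (g \ (f ∩ g)))).ncard := by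

  classical
  set A := orbitSub m (f ∩ g) (monFn m (f ∩ g)) with hA
  set D := orbitSub m f (monFn m (f \ (f ∩ g))) + orbitSub m g (monFn m (g \ (f ∩ g))) with hD
  have offind : ∀ (S : Finset (Fin m)) (B : Fin m → Fin m → ZMod 2) (ε : Point m),
      IsLTsub m S B ε → f ∩ g ⊆ S → ∀ u v : Point m, (∀ j, j ∉ f ∩ g → u j = v j) →
      act m B ε (monFn m (S \ (f ∩ g))) u = act m B ε (monFn m (S \ (f ∩ g))) v := by
    intro S B ε hB hsub u v huv
    rw [act_apply, act_apply]
    refine Finset.prod_congr rfl fun i hi => ?_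
    rw [Finset.mem_sdiff] at hi
    exact affMap_congr_off hB hsub hi.1 hi.2 huv
  have hinj : Set.InjOn (fun p : Fn m × Fn m => p.1 * p.2) (A ×ˢ D) := by
    rintro ⟨a, d⟩ hp ⟨a', d'⟩ hq hpq
    simp only at hpq
    obtain ⟨Ba, εa, hBa, haeq⟩ := hp.1
    obtain ⟨b, hbB, c, hcC, hbc⟩ := Set.mem_add.mp hp.2
    obtain ⟨Ba', εa', hBa', ha'eq⟩ := hq.1
    obtain ⟨b', hbB', c', hcC', hbc'⟩ := Set.mem_add.mp hq.2
    obtain ⟨Bb, εb, hBb, hbeq⟩ := hbB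
    obtain ⟨Bc, εc, hBc, hceq⟩ := hcC
    obtain ⟨Bb', εb', hBb', hbeq'⟩ := hbB'
    obtain ⟨Bc', εc', hBc', hceq'⟩ := hcC'
    have haeq : a = act m Ba εa (monFn m (f ∩ g)) := haeq
    have ha'eq : a' = act m Ba' εa' (monFn m (f ∩ g)) := ha'eq
    have hbc : b + c = d := hbc
    have hbc' : b' + c' = d' := hbc'
    have hpt : ∀ u, a u * d u = a' u * d' u := fun u => congrFun hpq u
    have hdpt : ∀ u, d u = b u + c u := fun u => (congrFun hbc u).symm
    have hdpt' : ∀ u, d' u = b' u + c' u := fun u => (congrFun hbc' u).symm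
    have hdoff : ∀ u v : Point m, (∀ j, j ∉ f ∩ g → u j = v j) → d u = d v := by
      intro u v huv
      rw [hdpt, hdpt, hbeq, hceq,
        offind f Bb εb hBb Finset.inter_subset_left u v huv,
        offind g Bc εc hBc Finset.inter_subset_right u v huv]
    have hdoff' : ∀ u v : Point m, (∀ j, j ∉ f ∩ g → u j = v j) → d' u = d' v := by
      intro u v huv
      rw [hdpt', hdpt', hbeq', hceq',
        offind f Bb' εb' hBb' Finset.inter_subset_left u v huv,
        offind g Bc' εc' hBc' Finset.inter_subset_right u v huv]
    -- Step 1 : d = d'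
    have dir : ∀ u, d u = 1 → d' u = 1 := by
      intro u hdu
      obtain ⟨u', hoff, hone⟩ := exists_one_point hBa u
      have hau' : a u' = 1 := by
        rw [haeq, act_apply]; exact z2_prod_eq_one.mpr hone
      have hdu' : d u' = 1 := by rw [hdoff u' u hoff]; exact hdu
      have := hpt u'
      rw [hau', hdu', one_mul] at this
      have h1 := (z2_mul_eq_one this.symm).2
      rw [hdoff' u' u hoff] at h1
      exact h1
    have dir' : ∀ u, d' u = 1 → d u = 1 := by
      intro u hdu
      obtain ⟨u', hoff, hone⟩ := exists_one_point hBa' u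
      have hau' : a' u' = 1 := by
        rw [ha'eq, act_apply]; exact z2_prod_eq_one.mpr hone
      have hdu' : d' u' = 1 := by rw [hdoff' u' u hoff]; exact hdu
      have := hpt u'
      rw [hau', hdu', one_mul] at this
      have h1 := (z2_mul_eq_one this).2
      rw [hdoff u' u hoff] at h1
      exact h1
    have hdd' : d = d' := by
      funext u
      rcases z2_cases (d u) with h0 | h1
      · rcases z2_cases (d' u) with h0' | h1'
        · rw [h0, h0']
        · rw [dir' u h1'] at h0; exact absurd h0 (by decide)
      · rw [h1, dir u h1]
    -- Step 2 : a = a'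
    have haa' : a = a' := by
      by_cases hempty : f ∩ g = ∅
      · funext u
        rw [haeq, ha'eq, act_apply, act_apply, hempty, Finset.prod_empty, Finset.prod_empty]
      · -- main case
        have hcardF : (f \ (f ∩ g)).card = 2 := by
          rw [Finset.card_sdiff_of_subset Finset.inter_subset_left, hfr, hh]
          have h1 : 1 ≤ (f ∩ g).card := Finset.card_pos.mpr (Finset.nonempty_iff_ne_empty.mpr hempty)
          omega
        have hcardG : (g \ (f ∩ g)).card = 2 := by
          rw [Finset.card_sdiff_of_subset Finset.inter_subset_right, hgr, hh]
          have h1 : 1 ≤ (f ∩ g).card := Finset.card_pos.mpr (Finset.nonempty_iff_ne_empty.mpr hempty)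
          omega
        obtain ⟨i1, i2, h12, hFeq⟩ := Finset.card_eq_two.mp hcardF
        obtain ⟨j1, j2, h34, hGeq⟩ := Finset.card_eq_two.mp hcardG
        have hiF : ∀ i ∈ f \ (f ∩ g), i ∈ f ∧ i ∉ g := by
          intro i hi
          rw [Finset.mem_sdiff, Finset.mem_inter] at hi
          exact ⟨hi.1, fun hig => hi.2 ⟨hi.1, hig⟩⟩
        have hjG : ∀ j ∈ g \ (f ∩ g), j ∈ g ∧ j ∉ f := by
          intro j hj
          rw [Finset.mem_sdiff, Finset.mem_inter] at hj
          exact ⟨hj.1, fun hjf => hj.2 ⟨hjf, hj.1⟩⟩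
        have hi1 := hiF i1 (by rw [hFeq]; exact Finset.mem_insert_self _ _)
        have hi2 := hiF i2 (by rw [hFeq]; simp)
        have hj1 := hjG j1 (by rw [hGeq]; exact Finset.mem_insert_self _ _)
        have hj2 := hjG j2 (by rw [hGeq]; simp)
        have h13 : i1 ≠ j1 := fun e => hj1.2 (e ▸ hi1.1)
        have h14 : i1 ≠ j2 := fun e => hj2.2 (e ▸ hi1.1)
        have h23 : i2 ≠ j1 := fun e => hj1.2 (e ▸ hi2.1)
        have h24 : i2 ≠ j2 := fun e => hj2.2 (e ▸ hi2.1)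
        have key : ∀ i ∈ f ∩ g, ∀ u : Point m,
            affMap m Ba εa u i = affMap m Ba' εa' u i := by
          intro i hi u
          set δ : Fn m := fun w => affMap m Ba εa w i + affMap m Ba' εa' w i with hδdef
          have hδ0 : ∀ u0, δ u0 = 0 := by
            intro u0
            refine span_lemma (εb := εb) (εc := εc) h12 h34 h13 h14 h23 h24 hBb.1 hBc.1 δ ?_ ?_ u0
            · intro u' v' w'
              simp only [hδdef, affMap_three]
              ring
            · intro w hw
              have hbw : b w = affMap m Bb εb w i1 * affMap m Bb εb w i2 := by
                rw [hbeq, act_apply, hFeq, Finset.prod_pair h12]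
              have hcw : c w = affMap m Bc εc w j1 * affMap m Bc εc w j2 := by
                rw [hceq, act_apply, hGeq, Finset.prod_pair h34]
              have hdw : d w = 1 := by rw [hdpt, hbw, hcw]; exact hw
              obtain ⟨w', hoff, hone⟩ := exists_one_point hBa w
              have haw' : a w' = 1 := by
                rw [haeq, act_apply]; exact z2_prod_eq_one.mpr hone
              have hdw' : d w' = 1 := by rw [hdoff w' w hoff]; exact hdw
              have hthis := hpt w'
              rw [haw', hdw', one_mul, ← hdd', hdw'] at hthis
              have haw'2 : a' w' = 1 := by
                have := (z2_mul_eq_one hthis.symm).1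
                rwa [mul_one] at hthis
              have hα' : affMap m Ba' εa' w' i = 1 := by
                rw [ha'eq, act_apply] at haw'2
                exact z2_prod_eq_one.mp haw'2 i hi
              have hα : affMap m Ba εa w' i = 1 := hone i hi
              have hδw' : δ w' = 0 := by rw [hδdef]; simp only []; rw [hα, hα']; decide
              have hsum : δ w + δ w' = 0 := by
                have e1 := affMap_add_self_congr hBa hi (u := w) (v := w')
                  (fun j hj => (hoff j hj).symm)
                have e2 := affMap_add_self_congr hBa' hi (u := w) (v := w')
                  (fun j hj => (hoff j hj).symm)
                simp only [hδdef]
                linear_combination e1 + e2 + z2_add_self (w i) + z2_add_self (w' i)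
              rw [hδw', add_zero] at hsum
              exact hsum
          have := hδ0 u
          simp only [hδdef] at this
          exact z2_eq_of_add_eq_zero this
        funext u
        rw [haeq, ha'eq, act_apply, act_apply]
        exact Finset.prod_congr rfl fun i hi => key i hi u
    exact Prod.ext haa' hdd'
  calc (A * D).ncard
      = ((fun p : Fn m × Fn m => p.1 * p.2) '' (A ×ˢ D)).ncard := by
        rw [Set.image_prod, Set.image2_mul]
    _ = (A ×ˢ D).ncard := Set.ncard_image_of_injOn hinj
    _ = A.ncard * D.ncard := by
        rw [← Nat.card_coe_set_eq, ← Nat.card_coe_set_eq, ← Nat.card_coe_set_eq,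
          Nat.card_congr (Equiv.Set.prod A D), Nat.card_prod]
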